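/- Let pᵢ ≤ qᵢ be two tuples of pairwise coprime integers ≥ 2. Define φ : G_Y → G_{Y'} by sending the element with normal form p₁⋯p_l(k + Σ xᵢ/pᵢ) (k ≥ 0, 0 ≤ xᵢ < pᵢ) to q₁⋯q_l(k + Σ xᵢ/qᵢ). Then φ is injective and superadditive: φ(x) + φ(x') ≤ φ(x + x') for all x, x' ∈ G_Y. -/

import Mathlib

/-- Membership in the numerical semigroup generated by the `P/pᵢ`, `P = ∏ pᵢ`. -/
def inG {l : ℕ} (p : Fin l → ℕ) (m : ℕ) : Prop :=
  ∃ a : Fin l → ℕ, m = ∑ i, a i * ((∏ j, p j) / p i)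

section Aux

variable {l : ℕ} (p : Fin l → ℕ)

lemma prodDivEq (hp2 : ∀ i, 2 ≤ p i) (i : Fin l) :
    (∏ j, p j) / p i = ∏ j ∈ Finset.univ.erase i, p j := by
  rw [← Finset.prod_erase_mul Finset.univ p (Finset.mem_univ i)]
  exact Nat.mul_div_cancel _ (by have := hp2 i; omega)

lemma mulDivCancelP (i : Fin l) : p i * ((∏ j, p j) / p i) = ∏ j, p j :=
  Nat.mul_div_cancel' (Finset.dvd_prod_of_mem p (Finset.mem_univ i)) 

lemma dvdOfNe (hp2 : ∀ i, 2 ≤ p i) {i j : Fin l} (h : i ≠ j) :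
    p i ∣ (∏ k, p k) / p j := by
  rw [prodDivEq p hp2 j]
  exact Finset.dvd_prod_of_mem p (Finset.mem_erase.mpr ⟨h, Finset.mem_univ i⟩)

lemma coprimeDiv (hp2 : ∀ i, 2 ≤ p i)
    (hpcop : ∀ i j, i ≠ j → Nat.Coprime (p i) (p j)) (i : Fin l) :
    Nat.Coprime ((∏ j, p j) / p i) (p i) := by
  rw [prodDivEq p hp2 i]
  exact Nat.Coprime.prod_left fun j hj => hpcop j i (Finset.mem_erase.mp hj).1

lemma sumDecomp (c y : Fin l → ℕ) :
    ∑ i, (c i * p i + y i) * ((∏ j, p j) / p i)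
      = (∑ i, c i) * (∏ j, p j) + ∑ i, y i * ((∏ j, p j) / p i) := by
  simp only [add_mul]
  rw [Finset.sum_add_distrib, Finset.sum_mul]
  congr 1
  refine Finset.sum_congr rfl fun i _ => ?_
  rw [mul_assoc, mulDivCancelP p i]

lemma normalExists (hp2 : ∀ i, 2 ≤ p i) (m : ℕ) (hm : inG p m) :
    ∃ (k : ℕ) (x : Fin l → ℕ), (∀ i, x i < p i) ∧
      m = k * (∏ j, p j) + ∑ i, x i * ((∏ j, p j) / p i) := by
  obtain ⟨a, rfl⟩ := hm
  refine ⟨∑ i, a i / p i, fun i => a i % p i,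
    fun i => Nat.mod_lt _ (by have := hp2 i; omega), ?_⟩
  have key : ∀ i, a i = (a i / p i) * p i + a i % p i := fun i => (Nat.div_add_mod' _ _).symm
  calc ∑ i, a i * ((∏ j, p j) / p i)
      = ∑ i, ((a i / p i) * p i + a i % p i) * ((∏ j, p j) / p i) := by
        refine Finset.sum_congr rfl fun i _ => ?_; rw [← key i]
    _ = (∑ i, a i / p i) * (∏ j, p j) + ∑ i, (a i % p i) * ((∏ j, p j) / p i) :=
        sumDecomp p _ _

lemma modEqNormal (hp2 : ∀ i, 2 ≤ p i) (k : ℕ) (x : Fin l → ℕ) (i : Fin l) :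
    k * (∏ j, p j) + ∑ i', x i' * ((∏ j, p j) / p i')
      ≡ x i * ((∏ j, p j) / p i) [MOD p i] := by
  have heq : k * (∏ j, p j) + ∑ i', x i' * ((∏ j, p j) / p i')
      = x i * ((∏ j, p j) / p i)
        + (k * (∏ j, p j) + ∑ i' ∈ Finset.univ.erase i, x i' * ((∏ j, p j) / p i')) := by
    rw [← Finset.add_sum_erase Finset.univ _ (Finset.mem_univ i)]
    ring
  rw [heq]
  have hd : p i ∣ k * (∏ j, p j) + ∑ i' ∈ Finset.univ.erase i, x i' * ((∏ j, p j) / p i') := by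
    refine dvd_add (Dvd.dvd.mul_left (Finset.dvd_prod_of_mem p (Finset.mem_univ i)) k) ?_
    exact Finset.dvd_sum fun j hj =>
      Dvd.dvd.mul_left (dvdOfNe p hp2 (Finset.mem_erase.mp hj).1.symm) _
  nth_rewrite 2 [← add_zero (x i * ((∏ j, p j) / p i))]
  exact Nat.ModEq.add_left _ ((Nat.modEq_zero_iff_dvd).mpr hd)

lemma normalUnique (hp2 : ∀ i, 2 ≤ p i)
    (hpcop : ∀ i j, i ≠ j → Nat.Coprime (p i) (p j))
    (k k' : ℕ) (x x' : Fin l → ℕ)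
    (hx : ∀ i, x i < p i) (hx' : ∀ i, x' i < p i)
    (h : k * (∏ j, p j) + ∑ i, x i * ((∏ j, p j) / p i)
       = k' * (∏ j, p j) + ∑ i, x' i * ((∏ j, p j) / p i)) :
    k = k' ∧ x = x' := by
  have hxx : x = x' := by
    funext i
    have h1 := modEqNormal p hp2 k x i
    have h2 := modEqNormal p hp2 k' x' i
    rw [h] at h1
    have h3 : x i * ((∏ j, p j) / p i) ≡ x' i * ((∏ j, p j) / p i) [MOD p i] :=
      h1.symm.trans h2
    have h4 : x i ≡ x' i [MOD p i] :=
      Nat.ModEq.cancel_right_of_coprime (coprimeDiv p hp2 hpcop i).symm h3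
    rwa [Nat.ModEq, Nat.mod_eq_of_lt (hx i), Nat.mod_eq_of_lt (hx' i)] at h4
  subst hxx
  refine ⟨?_, rfl⟩
  have hP : 0 < ∏ j, p j := Finset.prod_pos fun i _ => by have := hp2 i; omega
  have : k * (∏ j, p j) = k' * (∏ j, p j) := by omega
  exact Nat.eq_of_mul_eq_mul_right hP this

end Aux

/-- If `pᵢ ≤ qᵢ` are tuples of pairwise coprime integers `≥ 2`, then the map
`φ : G_Y → G_{Y'}` sending the normal form `p₁⋯p_l(k + Σ xᵢ/pᵢ)` to
`q₁⋯q_l(k + Σ xᵢ/qᵢ)` is injective and superadditive: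
`φ(x) + φ(x') ≤ φ(x + x')`. -/
theorem normal_form_map_injective_superadditive (l : ℕ) (p q : Fin l → ℕ)
    (hp2 : ∀ i, 2 ≤ p i) (hq2 : ∀ i, 2 ≤ q i)
    (hpcop : ∀ i j, i ≠ j → Nat.Coprime (p i) (p j))
    (hqcop : ∀ i j, i ≠ j → Nat.Coprime (q i) (q j))
    (hpq : ∀ i, p i ≤ q i)
    (φ : ℕ → ℕ)
    (hφ : ∀ (k : ℕ) (x : Fin l → ℕ), (∀ i, x i < p i) →
      φ (k * (∏ j, p j) + ∑ i, x i * ((∏ j, p j) / p i)) =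
        k * (∏ j, q j) + ∑ i, x i * ((∏ j, q j) / q i)) :
    Set.InjOn φ {m : ℕ | inG p m} ∧
      ∀ x x' : ℕ, inG p x → inG p x' → φ x + φ x' ≤ φ (x + x') := by
  constructor
  · intro m hm m' hm' hφeq
    obtain ⟨k, x, hx, rfl⟩ := normalExists p hp2 m hm
    obtain ⟨k', x', hx', rfl⟩ := normalExists p hp2 m' hm'
    rw [hφ k x hx, hφ k' x' hx'] at hφeq
    obtain ⟨hk, hxx⟩ := normalUnique q hq2 hqcop k k' x x'
      (fun i => lt_of_lt_of_le (hx i) (hpq i))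
      (fun i => lt_of_lt_of_le (hx' i) (hpq i)) hφeq
    rw [hk, hxx]
  · intro m m' hm hm'
    obtain ⟨k, x, hx, rfl⟩ := normalExists p hp2 m hm
    obtain ⟨k', x', hx', rfl⟩ := normalExists p hp2 m' hm'
    set c : Fin l → ℕ := fun i => (x i + x' i) / p i with hc
    set y : Fin l → ℕ := fun i => (x i + x' i) % p i with hy
    have hyp : ∀ i, y i < p i := fun i => Nat.mod_lt _ (by have := hp2 i; omega)
    have hdecomp : ∀ i, x i + x' i = c i * p i + y i := fun i => (Nat.div_add_mod' _ _).symm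
    have hsum : (k * (∏ j, p j) + ∑ i, x i * ((∏ j, p j) / p i))
        + (k' * (∏ j, p j) + ∑ i, x' i * ((∏ j, p j) / p i))
        = (k + k' + ∑ i, c i) * (∏ j, p j) + ∑ i, y i * ((∏ j, p j) / p i) := by
      have : ∑ i, x i * ((∏ j, p j) / p i) + ∑ i, x' i * ((∏ j, p j) / p i)
          = ∑ i, (c i * p i + y i) * ((∏ j, p j) / p i) := by
        rw [← Finset.sum_add_distrib]
        refine Finset.sum_congr rfl fun i _ => ?_
        rw [← hdecomp i, add_mul]
      rw [add_add_add_comm, this, sumDecomp p c y, ← add_assoc, ← add_mul, ← add_mul]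
    rw [hsum, hφ _ y hyp, hφ k x hx, hφ k' x' hx']
    have hQ : ∑ i, x i * ((∏ j, q j) / q i) + ∑ i, x' i * ((∏ j, q j) / q i)
        ≤ (∑ i, c i) * (∏ j, q j) + ∑ i, y i * ((∏ j, q j) / q i) := by
      rw [← Finset.sum_add_distrib, ← sumDecomp q c y]
      refine Finset.sum_le_sum fun i _ => ?_
      rw [← add_mul, hdecomp i]
      exact Nat.mul_le_mul_right _
        (add_le_add_left (Nat.mul_le_mul_left _ (hpq i)) _)
    calc k * (∏ j, q j) + ∑ i, x i * ((∏ j, q j) / q i)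
          + (k' * (∏ j, q j) + ∑ i, x' i * ((∏ j, q j) / q i))
        = (k + k') * (∏ j, q j) + (∑ i, x i * ((∏ j, q j) / q i)
            + ∑ i, x' i * ((∏ j, q j) / q i)) := by ring
      _ ≤ (k + k') * (∏ j, q j) + ((∑ i, c i) * (∏ j, q j)
            + ∑ i, y i * ((∏ j, q j) / q i)) := by omega
      _ = (k + k' + ∑ i, c i) * (∏ j, q j) + ∑ i, y i * ((∏ j, q j) / q i) := by ring
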